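/- Let Γ be a weighted congestion game fulfilling Conditions 1–2, Γ̂ its Ψ̂-game, ε ∈ (0,1) a constant, and S^(0) an arbitrary initial profile. Let a_min⁺ = min{a_{e,k} : e ∈ 𝔼, 0 ≤ k ≤ d, a_{e,k} > 0}, let Φ̂_min be the minimum of Φ̂ over all profiles, and let ĉ_max = max over all profiles S and players u of ĉ_u(S). Then every run of Algorithm 1 from S^(0) reaches a 1/(1−ε)-approximate pure Nash equilibrium of Γ̂ within at most (Φ̂(S^(0)) − Φ̂_min)/(ε·a_min⁺) ≤ N·ĉ_max/(ε·a_min⁺) iterations; i.e., if S^(0), …, S^(T) is a run in which S^(t) is not a 1/(1−ε)-approximate pure Nash equilibrium of Γ̂ for all t < T, then T ≤ (Φ̂(S^(0)) − Φ̂_min)/(ε·a_min⁺). -/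

import Mathlib

/-- `hpoly k l` is the complete homogeneous symmetric polynomial of degree `k`
evaluated at the entries of the list `l`, i.e. the sum of all monomials of
total degree `k` in the elements of `l`. -/
noncomputable def hpoly : ℕ → List ℝ → ℝ
  | 0, _ => 1
  | _ + 1, [] => 0
  | k + 1, a :: l => a * hpoly k (a :: l) + hpoly (k + 1) l
termination_by k l => (k, l.length)

/-- The `k`-order `Ψ̂`-function of a multiset `M` of reals:
`Ψ̂_k(M) = k! ·` (sum of all monomials of total degree `k` in the elements of `M`).
In particular `Ψ̂_0(M) = 1` and `Ψ̂_k(∅) = 0` for `k ≥ 1`. -/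
noncomputable def psiHat (k : ℕ) (M : Multiset ℝ) : ℝ :=
  (Nat.factorial k : ℝ) * hpoly k M.toList

/-- A weighted congestion game with `N` players, `E` resources, polynomial latency
functions of degree at most `d` (Condition 2, with coefficient-ratio bound `A`),
and players' weights in `[1, W]` (Condition 1). -/
structure WCGame (N E d : ℕ) (W A : ℝ) where
  /-- the strategy set of each player: a set of nonempty subsets of resources -/
  strat : Fin N → Set (Finset (Fin E))
  strat_nonempty : ∀ u, (strat u).Nonempty
  strat_valid : ∀ u, ∀ s ∈ strat u, s.Nonempty
  /-- the weight of each player -/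
  w : Fin N → ℝ
  /-- `a e k` is the coefficient of `x^k` in the latency function of resource `e` -/
  a : Fin E → ℕ → ℝ
  hd : 1 ≤ d
  hW : 1 ≤ W
  hw_lower : ∀ u, 1 ≤ w u
  hw_upper : ∀ u, w u ≤ W
  ha_nonneg : ∀ e k, 0 ≤ a e k
  ha_pos : ∀ e, 0 < ∑ k ∈ Finset.range (d + 1), a e k
  hA_pos : 0 < A
  hA_bound : ∀ e e' k k', k ≤ d → k' ≤ d → 0 < a e k → a e' k' ≤ A * a e k

namespace WCGame

/-- A (pure strategy) profile: a choice of a set of resources for every player. -/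
abbrev Profile (N E : ℕ) := Fin N → Finset (Fin E)

variable {N E d : ℕ} {W A : ℝ}

/-- A profile is feasible if every player uses one of her strategies. -/
def IsProfile (G : WCGame N E d W A) (S : Profile N E) : Prop :=
  ∀ u, S u ∈ G.strat u

/-- `U_e(S)`: the multiset of weights of the players using resource `e` in profile `S`. -/
noncomputable def load (G : WCGame N E d W A) (S : Profile N E) (e : Fin E) : Multiset ℝ :=
  (Finset.univ.filter (fun u => e ∈ S u)).val.map G.w

/-- The cost `c_u(S) = w_u · ∑_{e ∈ s_u} ∑_{k=0}^d a_{e,k} · L(U_e(S))^k` of player `u`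
in the original game `Γ`. -/
noncomputable def cost (G : WCGame N E d W A) (S : Profile N E) (u : Fin N) : ℝ :=
  G.w u * ∑ e ∈ S u, ∑ k ∈ Finset.range (d + 1), G.a e k * (G.load S e).sum ^ k

/-- The cost `ĉ_u(S) = w_u · ∑_{e ∈ s_u} ∑_{k=0}^d a_{e,k} · Ψ̂_k(U_e(S))` of player `u`
in the `Ψ̂`-game `Γ̂`. -/
noncomputable def hcost (G : WCGame N E d W A) (S : Profile N E) (u : Fin N) : ℝ :=
  G.w u * ∑ e ∈ S u, ∑ k ∈ Finset.range (d + 1), G.a e k * psiHat k (G.load S e)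

/-- The potential function `Φ̂(S) = ∑_e ∑_{k=0}^d (a_{e,k}/(k+1)) · Ψ̂_{k+1}(U_e(S))`
of the `Ψ̂`-game. -/
noncomputable def potHat (G : WCGame N E d W A) (S : Profile N E) : ℝ :=
  ∑ e : Fin E, ∑ k ∈ Finset.range (d + 1),
    G.a e k / ((k : ℝ) + 1) * psiHat (k + 1) (G.load S e)

/-- The approximate potential function `Φ(S) = ∑_e Ψ_e(L(U_e(S)))` with
`Ψ_e(x) = a_{e,0}·x + ∑_{k=1}^d a_{e,k}·(x^{k+1}/(k+1) + x^k/2)`. -/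
noncomputable def pot (G : WCGame N E d W A) (S : Profile N E) : ℝ :=
  ∑ e : Fin E,
    (G.a e 0 * (G.load S e).sum +
      ∑ k ∈ Finset.Icc 1 d,
        G.a e k * ((G.load S e).sum ^ (k + 1) / ((k : ℝ) + 1) + (G.load S e).sum ^ k / 2))

/-- `S` is a `ρ`-approximate pure Nash equilibrium w.r.t. the player costs `costFn`:
no player can decrease her cost by more than a factor `ρ` by a unilateral deviation. -/
def IsApproxPNE (G : WCGame N E d W A) (costFn : Profile N E → Fin N → ℝ) (ρ : ℝ)
    (S : Profile N E) : Prop :=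
  ∀ u, ∀ s' ∈ G.strat u, costFn S u ≤ ρ * costFn (Function.update S u s') u

/-- `sstar u` is a best response of player `u` to `S₋ᵤ` w.r.t. the costs `costFn`. -/
def IsBestResponses (G : WCGame N E d W A) (costFn : Profile N E → Fin N → ℝ)
    (S : Profile N E) (sstar : Fin N → Finset (Fin E)) : Prop :=
  ∀ u, sstar u ∈ G.strat u ∧
    ∀ s ∈ G.strat u, costFn (Function.update S u (sstar u)) u ≤ costFn (Function.update S u s) u

/-- One step of Algorithm 1 (the `1/(1-ε)` best response dynamic on the `Ψ̂`-game),
moving from profile `S` to profile `S'` by letting the chosen player `ut` (a player with a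
`1/(1-ε)`-move of maximum cost reduction) switch to her best response `sstar ut`. -/
def AlgOneStep (G : WCGame N E d W A) (ε : ℝ) (S S' : Profile N E) (ut : Fin N)
    (sstar : Fin N → Finset (Fin E)) : Prop :=
  G.IsBestResponses G.hcost S sstar ∧
  G.hcost S ut > (1 / (1 - ε)) * G.hcost (Function.update S ut (sstar ut)) ut ∧
  (∀ u, G.hcost S u > (1 / (1 - ε)) * G.hcost (Function.update S u (sstar u)) u →
    G.hcost S ut - G.hcost (Function.update S ut (sstar ut)) ut ≥
      G.hcost S u - G.hcost (Function.update S u (sstar u)) u) ∧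
  S' = Function.update S ut (sstar ut)

/-- One step of Algorithm 2 (the refined `ρ/(1-ε)` best response dynamic on `Γ`),
moving from profile `S` to profile `S'` by letting the chosen player `ut` (a player
maximizing `c_u(S) - ρ·c_u(s_u^*, S₋ᵤ)` among players with `ρ/(1-ε)`-moves) switch to
her best response `sstar ut`. -/
def AlgTwoStep (G : WCGame N E d W A) (ρ ε : ℝ) (S S' : Profile N E) (ut : Fin N)
    (sstar : Fin N → Finset (Fin E)) : Prop :=
  G.IsBestResponses G.cost S sstar ∧
  G.cost S ut > (ρ / (1 - ε)) * G.cost (Function.update S ut (sstar ut)) ut ∧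
  (∀ u, G.cost S u > (ρ / (1 - ε)) * G.cost (Function.update S u (sstar u)) u →
    G.cost S ut - ρ * G.cost (Function.update S ut (sstar ut)) ut ≥
      G.cost S u - ρ * G.cost (Function.update S u (sstar u)) u) ∧
  S' = Function.update S ut (sstar ut)

/-- `c_max`: the maximum cost of a player over all (feasible) profiles in `Γ`. -/
noncomputable def cMax (G : WCGame N E d W A) : ℝ :=
  sSup {x | ∃ S u, G.IsProfile S ∧ x = G.cost S u}

/-- `ĉ_max`: the maximum cost of a player over all (feasible) profiles in `Γ̂`. -/
noncomputable def hcMax (G : WCGame N E d W A) : ℝ :=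
  sSup {x | ∃ S u, G.IsProfile S ∧ x = G.hcost S u}

/-- `Φ̂_min`: the minimum of the potential `Φ̂` over all (feasible) profiles. -/
noncomputable def potHatMin (G : WCGame N E d W A) : ℝ :=
  sInf {x | ∃ S, G.IsProfile S ∧ x = G.potHat S}

/-- `a_min⁺`: the minimum positive coefficient of the latency functions. -/
noncomputable def aMinPos (G : WCGame N E d W A) : ℝ :=
  sInf {x | 0 < x ∧ ∃ e k, k ≤ d ∧ x = G.a e k}

end WCGame



lemma hpoly_zero (l : List ℝ) : hpoly 0 l = 1 := by rw [hpoly]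
lemma hpoly_nil (k : ℕ) : hpoly (k+1) [] = 0 := by rw [hpoly]
lemma hpoly_cons (k : ℕ) (a : ℝ) (l : List ℝ) :
    hpoly (k+1) (a :: l) = a * hpoly k (a :: l) + hpoly (k+1) l := by rw [hpoly]

lemma hpoly_nonneg : ∀ (k : ℕ) (l : List ℝ), (∀ x ∈ l, 0 ≤ x) → 0 ≤ hpoly k l
  | 0, l, _ => by rw [hpoly_zero]; norm_num
  | k+1, [], _ => by rw [hpoly_nil]
  | k+1, a :: l, h => by
      rw [hpoly_cons]
      have ha : 0 ≤ a := h a (by simp)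
      have h1 := hpoly_nonneg k (a :: l) h
      have h2 := hpoly_nonneg (k+1) l (fun x hx => h x (by simp [hx]))
      positivity
termination_by k l => (k, l.length)

lemma one_le_hpoly : ∀ (k : ℕ) (a : ℝ) (l : List ℝ), (∀ x ∈ a :: l, 1 ≤ x) →
    1 ≤ hpoly k (a :: l)
  | 0, a, l, _ => by rw [hpoly_zero]
  | k+1, a, l, h => by
      rw [hpoly_cons]
      have ha : 1 ≤ a := h a (by simp)
      have h1 := one_le_hpoly k a l h
      have h2 : 0 ≤ hpoly (k+1) l :=
        hpoly_nonneg _ _ (fun x hx => le_trans zero_le_one (h x (by simp [hx])))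
      nlinarith
termination_by k => k

lemma hpoly_le_cons (k : ℕ) (a : ℝ) (l : List ℝ) (ha : 0 ≤ a) (hl : ∀ x ∈ l, 0 ≤ x) :
    hpoly k l ≤ hpoly k (a :: l) := by
  cases k with
  | zero => simp [hpoly_zero]
  | succ k =>
      rw [hpoly_cons]
      have h1 := hpoly_nonneg k (a :: l) (by
        intro x hx
        rcases List.mem_cons.mp hx with h|h
        · exact h ▸ ha
        · exact hl x h)
      nlinarith [mul_nonneg ha h1]

lemma hpoly_succ_le : ∀ (l : List ℝ) (k : ℕ), (∀ x ∈ l, 0 ≤ x) →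
    hpoly (k+1) l ≤ l.sum * hpoly k l
  | [], k, _ => by rw [hpoly_nil]; simp [hpoly_zero]
  | a :: l, k, h => by
      have ha : 0 ≤ a := h a (by simp)
      have hl : ∀ x ∈ l, 0 ≤ x := fun x hx => h x (by simp [hx])
      have hs : 0 ≤ l.sum := List.sum_nonneg hl
      rw [hpoly_cons, List.sum_cons]
      have h1 := hpoly_succ_le l k hl
      have h2 := hpoly_le_cons k a l ha hl
      have h3 := hpoly_nonneg k l hl
      nlinarith

lemma hpoly_swap (x y : ℝ) (l : List ℝ) : ∀ k, hpoly k (y :: x :: l) = hpoly k (x :: y :: l) := by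
  have key : ∀ k, hpoly k (y :: x :: l) = hpoly k (x :: y :: l) ∧
      hpoly (k+1) (y :: x :: l) = hpoly (k+1) (x :: y :: l) := by
    intro k
    induction k with
    | zero =>
        refine ⟨by rw [hpoly_zero, hpoly_zero], ?_⟩
        rw [hpoly_cons, hpoly_cons, hpoly_cons, hpoly_cons, hpoly_zero, hpoly_zero,
          hpoly_zero, hpoly_zero]
        ring
    | succ k ih =>
        obtain ⟨h0, h1⟩ := ih
        refine ⟨h1, ?_⟩
        have e1 : hpoly (k+1+1) (y :: x :: l) =
            y * hpoly (k+1) (y :: x :: l) + (x * hpoly (k+1) (x :: l) + hpoly (k+1+1) l) := by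
          rw [hpoly_cons (k+1) y (x :: l), hpoly_cons (k+1) x l]
        have e2 : hpoly (k+1+1) (x :: y :: l) =
            x * hpoly (k+1) (x :: y :: l) + (y * hpoly (k+1) (y :: l) + hpoly (k+1+1) l) := by
          rw [hpoly_cons (k+1) x (y :: l), hpoly_cons (k+1) y l]
        have e3 : hpoly (k+1) (y :: x :: l) = y * hpoly k (y :: x :: l) + hpoly (k+1) (x :: l) :=
          hpoly_cons k y (x :: l)
        have e4 : hpoly (k+1) (x :: y :: l) = x * hpoly k (x :: y :: l) + hpoly (k+1) (y :: l) :=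
          hpoly_cons k x (y :: l)
        rw [e1, e2]
        have hP : hpoly (k+1) (x :: l) = hpoly (k+1) (y :: x :: l) - y * hpoly k (y :: x :: l) := by
          rw [e3]; ring
        have hQ : hpoly (k+1) (y :: l) = hpoly (k+1) (x :: y :: l) - x * hpoly k (x :: y :: l) := by
          rw [e4]; ring
        rw [hP, hQ, h0, h1]
        ring
  exact fun k => (key k).1

lemma hpoly_perm {l₁ l₂ : List ℝ} (h : l₁.Perm l₂) : ∀ k, hpoly k l₁ = hpoly k l₂ := by
  induction h with
  | nil => intro k; rfl
  | cons a h ih =>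
      intro k
      induction k with
      | zero => rw [hpoly_zero, hpoly_zero]
      | succ k ihk => rw [hpoly_cons, hpoly_cons, ihk, ih]
  | swap x y l => exact hpoly_swap x y l
  | trans h1 h2 ih1 ih2 => intro k; rw [ih1, ih2]

lemma psiHat_zero' (M : Multiset ℝ) : psiHat 0 M = 1 := by
  simp [psiHat, hpoly_zero]

lemma psiHat_empty (k : ℕ) : psiHat (k+1) (0 : Multiset ℝ) = 0 := by
  simp [psiHat, Multiset.toList_zero, hpoly_nil]

lemma toList_cons_perm (x : ℝ) (M : Multiset ℝ) :
    ((x ::ₘ M).toList).Perm (x :: M.toList) := by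
  rw [← Multiset.coe_eq_coe]
  simp only [Multiset.coe_toList, ← Multiset.cons_coe, Multiset.coe_toList]

lemma psiHat_cons (k : ℕ) (x : ℝ) (M : Multiset ℝ) :
    psiHat (k+1) (x ::ₘ M) = ((k : ℝ)+1) * (x * psiHat k (x ::ₘ M)) + psiHat (k+1) M := by
  unfold psiHat
  rw [hpoly_perm (toList_cons_perm x M), hpoly_cons,
    hpoly_perm (toList_cons_perm x M) k]
  push_cast [Nat.factorial_succ]
  ring

lemma psiHat_nonneg (k : ℕ) (M : Multiset ℝ) (h : ∀ x ∈ M, 0 ≤ x) : 0 ≤ psiHat k M := by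
  have : ∀ x ∈ M.toList, 0 ≤ x := fun x hx => h x (by rwa [← Multiset.mem_toList])
  have := hpoly_nonneg k M.toList this
  unfold psiHat
  positivity

lemma one_le_psiHat (k : ℕ) (M : Multiset ℝ) (hM : M ≠ 0) (h : ∀ x ∈ M, 1 ≤ x) :
    1 ≤ psiHat k M := by
  have hl : ∀ x ∈ M.toList, 1 ≤ x := fun x hx => h x (by rwa [← Multiset.mem_toList])
  obtain ⟨a, l, hal⟩ : ∃ a l, M.toList = a :: l := by
    cases hml : M.toList with
    | nil => exact absurd (by simpa using congrArg (Multiset.ofList) hml) hM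
    | cons a l => exact ⟨a, l, rfl⟩
  have h1 : 1 ≤ hpoly k M.toList := by rw [hal]; exact one_le_hpoly k a l (hal ▸ hl)
  have h2 : (1 : ℝ) ≤ (Nat.factorial k : ℝ) := by
    exact_mod_cast Nat.one_le_iff_ne_zero.mpr (Nat.factorial_ne_zero k)
  unfold psiHat
  nlinarith

lemma psiHat_succ_le (k : ℕ) (M : Multiset ℝ) (h : ∀ x ∈ M, 0 ≤ x) :
    psiHat (k+1) M ≤ ((k : ℝ)+1) * M.sum * psiHat k M := by
  have hl : ∀ x ∈ M.toList, 0 ≤ x := fun x hx => h x (by rwa [← Multiset.mem_toList])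
  have h1 := hpoly_succ_le M.toList k hl
  have hsum : M.toList.sum = M.sum := by
    rw [← Multiset.sum_coe, Multiset.coe_toList]
  unfold psiHat
  push_cast [Nat.factorial_succ]
  have hf : (0:ℝ) ≤ (Nat.factorial k : ℝ) := by positivity
  calc ((k:ℝ)+1) * (Nat.factorial k : ℝ) * hpoly (k+1) M.toList
      ≤ ((k:ℝ)+1) * (Nat.factorial k : ℝ) * (M.toList.sum * hpoly k M.toList) := by
        apply mul_le_mul_of_nonneg_left h1; positivity
    _ = ((k:ℝ)+1) * M.sum * ((Nat.factorial k : ℝ) * hpoly k M.toList) := by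
        rw [hsum]; ring

namespace WCGame

variable {N E d : ℕ} {W A : ℝ}

/-- per-resource Ψ̂-latency total -/
noncomputable def rcost (G : WCGame N E d W A) (e : Fin E) (M : Multiset ℝ) : ℝ :=
  ∑ k ∈ Finset.range (d + 1), G.a e k * psiHat k M

/-- per-resource potential -/
noncomputable def rpot (G : WCGame N E d W A) (e : Fin E) (M : Multiset ℝ) : ℝ :=
  ∑ k ∈ Finset.range (d + 1), G.a e k / ((k : ℝ) + 1) * psiHat (k + 1) M

lemma potHat_eq_rpot (G : WCGame N E d W A) (S : Profile N E) :
    G.potHat S = ∑ e : Fin E, G.rpot e (G.load S e) := rfl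

lemma hcost_eq_rcost (G : WCGame N E d W A) (S : Profile N E) (u : Fin N) :
    G.hcost S u = G.w u * ∑ e ∈ S u, G.rcost e (G.load S e) := rfl

lemma rpot_cons (G : WCGame N E d W A) (e : Fin E) (x : ℝ) (M : Multiset ℝ) :
    G.rpot e (x ::ₘ M) - G.rpot e M = x * G.rcost e (x ::ₘ M) := by
  unfold rpot rcost
  rw [← Finset.sum_sub_distrib, Finset.mul_sum]
  apply Finset.sum_congr rfl
  intro k _
  rw [psiHat_cons]
  have hk : ((k : ℝ) + 1) ≠ 0 := by positivity
  field_simp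
  ring

lemma mem_load (G : WCGame N E d W A) (S : Profile N E) (e : Fin E) (x : ℝ)
    (hx : x ∈ G.load S e) : ∃ v, x = G.w v := by
  unfold load at hx
  obtain ⟨v, _, rfl⟩ := Multiset.mem_map.mp hx
  exact ⟨v, rfl⟩

lemma load_nonneg (G : WCGame N E d W A) (S : Profile N E) (e : Fin E) :
    ∀ x ∈ G.load S e, 0 ≤ x := by
  intro x hx
  obtain ⟨v, rfl⟩ := G.mem_load S e x hx
  exact le_trans zero_le_one (G.hw_lower v)

lemma one_le_load (G : WCGame N E d W A) (S : Profile N E) (e : Fin E) :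
    ∀ x ∈ G.load S e, 1 ≤ x := by
  intro x hx
  obtain ⟨v, rfl⟩ := G.mem_load S e x hx
  exact G.hw_lower v

lemma w_mem_load (G : WCGame N E d W A) (S : Profile N E) (e : Fin E) (u : Fin N)
    (h : e ∈ S u) : G.w u ∈ G.load S e := by
  unfold load
  exact Multiset.mem_map.mpr ⟨u, by simp [h], rfl⟩

lemma rcost_nonneg (G : WCGame N E d W A) (e : Fin E) (S : Profile N E) :
    0 ≤ G.rcost e (G.load S e) := by
  apply Finset.sum_nonneg
  intro k _
  exact mul_nonneg (G.ha_nonneg e k) (psiHat_nonneg k _ (G.load_nonneg S e))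

lemma hcost_nonneg (G : WCGame N E d W A) (S : Profile N E) (u : Fin N) :
    0 ≤ G.hcost S u := by
  rw [hcost_eq_rcost]
  apply mul_nonneg (le_trans zero_le_one (G.hw_lower u))
  exact Finset.sum_nonneg fun e _ => G.rcost_nonneg e S

lemma potHat_nonneg (G : WCGame N E d W A) (S : Profile N E) : 0 ≤ G.potHat S := by
  rw [potHat_eq_rpot]
  apply Finset.sum_nonneg
  intro e _
  apply Finset.sum_nonneg
  intro k _
  apply mul_nonneg (div_nonneg (G.ha_nonneg e k) (by positivity))
  exact psiHat_nonneg _ _ (G.load_nonneg S e)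

lemma load_update_iff (G : WCGame N E d W A) (S : Profile N E) (u : Fin N)
    (s' : Finset (Fin E)) (e : Fin E) (h : e ∈ S u ↔ e ∈ s') :
    G.load (Function.update S u s') e = G.load S e := by
  unfold load
  congr 1
  congr 1
  apply Finset.filter_congr
  intro v _
  rcases eq_or_ne v u with rfl | hv
  · simp [Function.update_self, h]
  · simp [Function.update_of_ne hv]

lemma load_update_of_mem (G : WCGame N E d W A) (S : Profile N E) (u : Fin N)
    (s' : Finset (Fin E)) (e : Fin E) (h1 : e ∈ S u) (h2 : e ∉ s') :
    G.load S e = G.w u ::ₘ G.load (Function.update S u s') e := by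
  unfold load
  have hfil : Finset.univ.filter (fun v => e ∈ S v) =
      insert u (Finset.univ.filter (fun v => e ∈ Function.update S u s' v)) := by
    ext v
    rcases eq_or_ne v u with rfl | hv
    · simp [h1]
    · simp [Function.update_of_ne hv, hv]
  have hnot : u ∉ Finset.univ.filter (fun v => e ∈ Function.update S u s' v) := by
    simp [Function.update_self, h2]
  rw [hfil, Finset.insert_val_of_notMem hnot, Multiset.map_cons]

lemma load_update_of_not_mem (G : WCGame N E d W A) (S : Profile N E) (u : Fin N)
    (s' : Finset (Fin E)) (e : Fin E) (h1 : e ∉ S u) (h2 : e ∈ s') :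
    G.load (Function.update S u s') e = G.w u ::ₘ G.load S e := by
  have := G.load_update_of_mem (Function.update S u s') u (S u) e
    (by rw [Function.update_self]; exact h2) h1
  rwa [Function.update_idem, Function.update_eq_self] at this

end WCGame

namespace WCGame

variable {N E d : ℕ} {W A : ℝ}

lemma potHat_sub_eq (G : WCGame N E d W A) (S : Profile N E) (u : Fin N)
    (s' : Finset (Fin E)) :
    G.potHat S - G.potHat (Function.update S u s') =
      G.hcost S u - G.hcost (Function.update S u s') u := by
  set S' := Function.update S u s' with hS'
  have hSu' : S' u = s' := Function.update_self u s' S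
  rw [potHat_eq_rpot, potHat_eq_rpot, hcost_eq_rcost, hcost_eq_rcost, hSu']
  have hL : ∀ t : Finset (Fin E), ∀ f : Fin E → ℝ,
      ∑ e ∈ t, f e = ∑ e : Fin E, if e ∈ t then f e else 0 := by
    intro t f
    rw [Finset.sum_ite_mem, Finset.univ_inter]
  rw [hL (S u), hL s', ← mul_sub, ← Finset.sum_sub_distrib, ← Finset.sum_sub_distrib,
    Finset.mul_sum]
  apply Finset.sum_congr rfl
  intro e _
  by_cases h1 : e ∈ S u <;> by_cases h2 : e ∈ s'
  · have hl := G.load_update_iff S u s' e (by simp [h1, h2])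
    rw [hl]
    simp [h1, h2]
  · have hl := G.load_update_of_mem S u s' e h1 h2
    rw [if_pos h1, if_neg h2, hl, ← hS', rpot_cons]
    ring
  · have hl := G.load_update_of_not_mem S u s' e h1 h2
    rw [if_neg h1, if_pos h2, hl]
    have h3 := G.rpot_cons e (G.w u) (G.load S e)
    linarith
  · have hl := G.load_update_iff S u s' e (by simp [h1, h2])
    rw [hl]
    simp [h1, h2]

end WCGame

namespace WCGame

variable {N E d : ℕ} {W A : ℝ}

lemma aMinPos_bddBelow (G : WCGame N E d W A) :
    BddBelow {x | 0 < x ∧ ∃ e k, k ≤ d ∧ x = G.a e k} :=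
  ⟨0, fun x hx => le_of_lt hx.1⟩

lemma exists_pos_coeff (G : WCGame N E d W A) (e : Fin E) :
    ∃ k, k ≤ d ∧ 0 < G.a e k := by
  obtain ⟨k, hk, hpos⟩ := Finset.exists_lt_of_sum_lt (f := fun _ => (0:ℝ))
    (by simpa using G.ha_pos e)
  exact ⟨k, Nat.lt_succ_iff.mp (Finset.mem_range.mp hk), hpos⟩

lemma aMinPos_pos (G : WCGame N E d W A) (e : Fin E) : 0 < G.aMinPos := by
  set s := {x | 0 < x ∧ ∃ e k, k ≤ d ∧ x = G.a e k} with hs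
  obtain ⟨k, hkd, hk⟩ := G.exists_pos_coeff e
  have hne : s.Nonempty := ⟨G.a e k, hk, e, k, hkd, rfl⟩
  have hfin : s.Finite := by
    apply Set.Finite.subset (Set.finite_range
      (fun p : Fin E × Fin (d+1) => G.a p.1 p.2))
    rintro x ⟨-, e', k', hk', rfl⟩
    exact ⟨(e', ⟨k', Nat.lt_succ_of_le hk'⟩), rfl⟩
  have := hne.csInf_mem hfin
  exact this.1

lemma aMinPos_le (G : WCGame N E d W A) (e : Fin E) (k : ℕ) (hkd : k ≤ d)
    (hk : 0 < G.a e k) : G.aMinPos ≤ G.a e k :=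
  csInf_le G.aMinPos_bddBelow ⟨hk, e, k, hkd, rfl⟩

lemma aMinPos_le_hcost (G : WCGame N E d W A) {S : Profile N E} (hS : G.IsProfile S)
    (u : Fin N) : G.aMinPos ≤ G.hcost S u := by
  obtain ⟨e, he⟩ := G.strat_valid u (S u) (hS u)
  obtain ⟨k, hkd, hk⟩ := G.exists_pos_coeff e
  have hload : G.w u ∈ G.load S e := G.w_mem_load S e u he
  have hpsi : 1 ≤ psiHat k (G.load S e) :=
    one_le_psiHat k _ (fun h0 => by simp [h0] at hload) (G.one_le_load S e)
  have h1 : G.a e k ≤ G.a e k * psiHat k (G.load S e) := by nlinarith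
  have h2 : G.a e k * psiHat k (G.load S e) ≤ G.rcost e (G.load S e) := by
    apply Finset.single_le_sum (f := fun k => G.a e k * psiHat k (G.load S e))
      (fun j _ => mul_nonneg (G.ha_nonneg e j) (psiHat_nonneg j _ (G.load_nonneg S e)))
    exact Finset.mem_range.mpr (Nat.lt_succ_of_le hkd)
  have h3 : G.rcost e (G.load S e) ≤ ∑ e' ∈ S u, G.rcost e' (G.load S e') :=
    Finset.single_le_sum (fun e' _ => G.rcost_nonneg e' S) he
  have h4 : ∑ e' ∈ S u, G.rcost e' (G.load S e') ≤
      G.w u * ∑ e' ∈ S u, G.rcost e' (G.load S e') := by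
    have hw := G.hw_lower u
    have : 0 ≤ ∑ e' ∈ S u, G.rcost e' (G.load S e') :=
      Finset.sum_nonneg fun e' _ => G.rcost_nonneg e' S
    nlinarith
  rw [hcost_eq_rcost]
  calc G.aMinPos ≤ G.a e k := G.aMinPos_le e k hkd hk
    _ ≤ G.a e k * psiHat k (G.load S e) := h1
    _ ≤ G.rcost e (G.load S e) := h2
    _ ≤ ∑ e' ∈ S u, G.rcost e' (G.load S e') := h3
    _ ≤ _ := h4

lemma load_sum_eq (G : WCGame N E d W A) (S : Profile N E) (e : Fin E) :
    (G.load S e).sum = ∑ v : Fin N, if e ∈ S v then G.w v else 0 := by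
  have h0 : (G.load S e).sum = ∑ v ∈ Finset.filter (fun u => e ∈ S u) Finset.univ, G.w v := rfl
  rw [h0, Finset.sum_filter]

lemma rpot_le (G : WCGame N E d W A) (e : Fin E) (S : Profile N E) :
    G.rpot e (G.load S e) ≤ (G.load S e).sum * G.rcost e (G.load S e) := by
  unfold rpot rcost
  rw [Finset.mul_sum]
  apply Finset.sum_le_sum
  intro k _
  have hψ := psiHat_succ_le k (G.load S e) (G.load_nonneg S e)
  have ha := G.ha_nonneg e k
  have hk1 : (0:ℝ) < (k:ℝ)+1 := by positivity
  calc G.a e k / ((k:ℝ)+1) * psiHat (k+1) (G.load S e)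
      ≤ G.a e k / ((k:ℝ)+1) * (((k:ℝ)+1) * (G.load S e).sum * psiHat k (G.load S e)) := by
        apply mul_le_mul_of_nonneg_left hψ (by positivity)
    _ = (G.load S e).sum * (G.a e k * psiHat k (G.load S e)) := by
        field_simp

lemma potHat_le_sum_hcost (G : WCGame N E d W A) (S : Profile N E) :
    G.potHat S ≤ ∑ u : Fin N, G.hcost S u := by
  calc G.potHat S ≤ ∑ e : Fin E, (G.load S e).sum * G.rcost e (G.load S e) := by
        rw [potHat_eq_rpot]
        exact Finset.sum_le_sum fun e _ => G.rpot_le e S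
    _ = ∑ e : Fin E, ∑ v : Fin N,
        (if e ∈ S v then G.w v * G.rcost e (G.load S e) else 0) := by
        apply Finset.sum_congr rfl
        intro e _
        rw [load_sum_eq, Finset.sum_mul]
        apply Finset.sum_congr rfl
        intro v _
        split <;> simp
    _ = ∑ v : Fin N, ∑ e : Fin E,
        (if e ∈ S v then G.w v * G.rcost e (G.load S e) else 0) := Finset.sum_comm
    _ = ∑ v : Fin N, G.hcost S v := by
        apply Finset.sum_congr rfl
        intro v _
        rw [hcost_eq_rcost, Finset.mul_sum, Finset.sum_ite_mem, Finset.univ_inter]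

end WCGame

namespace WCGame

variable {N E d : ℕ} {W A : ℝ}

lemma hcost_le_hcMax (G : WCGame N E d W A) {S : Profile N E} (hS : G.IsProfile S)
    (u : Fin N) : G.hcost S u ≤ G.hcMax := by
  apply le_csSup
  · apply Set.Finite.bddAbove
    apply Set.Finite.subset (Set.finite_range
      (fun p : Profile N E × Fin N => G.hcost p.1 p.2))
    rintro x ⟨S', u', -, rfl⟩
    exact ⟨(S', u'), rfl⟩
  · exact ⟨S, u, hS, rfl⟩

end WCGame

open WCGame in
/-- Theorem 2: every run of Algorithm 1 from an initial profile `S⁰` reaches a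
`1/(1−ε)`-approximate pure Nash equilibrium of the `Ψ̂`-game `Γ̂` within at most
`(Φ̂(S⁰) − Φ̂_min)/(ε·a_min⁺) ≤ N·ĉ_max/(ε·a_min⁺)` iterations: if `S⁰, …, S^T` is a run
in which `S^t` is not a `1/(1−ε)`-approximate pure Nash equilibrium of `Γ̂` for all `t < T`,
then `T ≤ (Φ̂(S⁰) − Φ̂_min)/(ε·a_min⁺)`. -/
theorem algOne_runtime_potential_bound {N E d : ℕ} {W A : ℝ}
    (G : WCGame N E d W A) (ε : ℝ) (hε0 : 0 < ε) (hε1 : ε < 1)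
    (Srun : ℕ → Profile N E) (T : ℕ) (h0 : G.IsProfile (Srun 0))
    (hrun : ∀ t < T, ¬ G.IsApproxPNE G.hcost (1 / (1 - ε)) (Srun t) ∧
      ∃ ut sstar, G.AlgOneStep ε (Srun t) (Srun (t + 1)) ut sstar) :
    (T : ℝ) ≤ (G.potHat (Srun 0) - G.potHatMin) / (ε * G.aMinPos) ∧
      (G.potHat (Srun 0) - G.potHatMin) / (ε * G.aMinPos) ≤
        (N : ℝ) * G.hcMax / (ε * G.aMinPos) := by
  rcases Nat.eq_zero_or_pos N with hN | hN
  · subst hN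
    have hT : T = 0 := by
      by_contra h
      exact (hrun 0 (Nat.pos_of_ne_zero h)).1 (fun u => u.elim0)
    have hpot : ∀ S : Profile 0 E, G.potHat S = 0 := by
      intro S
      rw [potHat_eq_rpot]
      apply Finset.sum_eq_zero
      intro e _
      have hload : G.load S e = 0 := by
        unfold WCGame.load
        simp
      unfold WCGame.rpot
      apply Finset.sum_eq_zero
      intro k _
      rw [hload, psiHat_empty, mul_zero]
    have hmin : G.potHatMin = 0 := by
      have hset : {x | ∃ S, G.IsProfile S ∧ x = G.potHat S} = {0} := by
        ext x
        simp only [Set.mem_setOf_eq, Set.mem_singleton_iff]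
        constructor
        · rintro ⟨S, -, rfl⟩
          exact hpot S
        · rintro rfl
          exact ⟨fun _ => ∅, fun u => u.elim0, (hpot _).symm⟩
      rw [WCGame.potHatMin, hset, csInf_singleton]
    subst hT
    rw [hmin, hpot (Srun 0)]
    norm_num
  · obtain ⟨s0, hs0⟩ := G.strat_nonempty ⟨0, hN⟩
    obtain ⟨e0, he0⟩ := G.strat_valid _ s0 hs0
    have haM : 0 < G.aMinPos := G.aMinPos_pos e0
    have hden : 0 < ε * G.aMinPos := mul_pos hε0 haM
    have h1ε : 0 < 1 - ε := by linarith
    have hfeas : ∀ t, t ≤ T → G.IsProfile (Srun t) := by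
      intro t
      induction t with
      | zero => exact fun _ => h0
      | succ t ih =>
          intro ht
          have ht' : t < T := lt_of_lt_of_le (Nat.lt_succ_self t) ht
          obtain ⟨ut, sstar, hbr, -, -, heq⟩ := (hrun t ht').2
          intro v
          rw [heq]
          rcases eq_or_ne v ut with rfl | hv
          · rw [Function.update_self]
            exact (hbr v).1
          · rw [Function.update_of_ne hv]
            exact ih (le_of_lt ht') v
    have hdec : ∀ t, t < T → ε * G.aMinPos ≤ G.potHat (Srun t) - G.potHat (Srun (t+1)) := by
      intro t ht
      obtain ⟨ut, sstar, hbr, hgt, -, heq⟩ := (hrun t ht).2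
      have hps := G.potHat_sub_eq (Srun t) ut (sstar ut)
      have hc' : 0 ≤ G.hcost (Function.update (Srun t) ut (sstar ut)) ut :=
        G.hcost_nonneg _ ut
      have hcS : G.aMinPos ≤ G.hcost (Srun t) ut :=
        G.aMinPos_le_hcost (hfeas t (le_of_lt ht)) ut
      rw [gt_iff_lt, one_div, inv_mul_eq_div, div_lt_iff₀ h1ε] at hgt
      rw [heq, hps]
      nlinarith [mul_le_mul_of_nonneg_left hcS (le_of_lt hε0)]
    have htel : ∀ t, t ≤ T → (t : ℝ) * (ε * G.aMinPos) ≤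
        G.potHat (Srun 0) - G.potHat (Srun t) := by
      intro t
      induction t with
      | zero => intro _; simp
      | succ t ih =>
          intro ht
          have ht' : t < T := lt_of_lt_of_le (Nat.lt_succ_self t) ht
          have h1 := ih (le_of_lt ht')
          have h2 := hdec t ht'
          push_cast
          rw [add_mul, one_mul]
          linarith
    have hbdd : BddBelow {x | ∃ S, G.IsProfile S ∧ x = G.potHat S} := by
      refine ⟨0, ?_⟩
      rintro x ⟨S, -, rfl⟩
      exact G.potHat_nonneg S
    have hminle : G.potHatMin ≤ G.potHat (Srun T) :=
      csInf_le hbdd ⟨Srun T, hfeas T le_rfl, rfl⟩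
    constructor
    · rw [le_div_iff₀ hden]
      have := htel T le_rfl
      linarith
    · apply (div_le_div_iff_of_pos_right hden).mpr
      have hmin0 : 0 ≤ G.potHatMin := by
        have hne : {x | ∃ S, G.IsProfile S ∧ x = G.potHat S}.Nonempty :=
          ⟨G.potHat (Srun 0), Srun 0, h0, rfl⟩
        apply le_csInf hne
        rintro x ⟨S, -, rfl⟩
        exact G.potHat_nonneg S
      have hle := G.potHat_le_sum_hcost (Srun 0)
      have hsum : ∑ u : Fin N, G.hcost (Srun 0) u ≤ (N : ℝ) * G.hcMax := by
        calc ∑ u : Fin N, G.hcost (Srun 0) u ≤ ∑ _u : Fin N, G.hcMax :=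
              Finset.sum_le_sum fun u _ => G.hcost_le_hcMax h0 u
          _ = (N : ℝ) * G.hcMax := by
              rw [Finset.sum_const, Finset.card_univ, Fintype.card_fin, nsmul_eq_mul]
      linarith
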